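/- Let p be a prime number, let A = (ℤ/pℤ)[x, y, z] be the polynomial ring in three variables over the field with p elements, and let R = A/((x^p, y^p) + (x, y, z)^{p+1}). Then the annihilator of the image of z in R is exactly the image in R of the ideal (x, y, z)^p; consequently the ideal of R generated by the image of z is isomorphic, as an R-module, to R/((x, y, z)^p·R). -/

import Mathlib

open MvPolynomial

namespace EHUAux

variable {k : Type*} [CommRing k]

/-- total degree of an exponent vector on `Fin 3` -/
def S3 (d : Fin 3 →₀ ℕ) : ℕ := d 0 + d 1 + d 2

lemma S3_add (d e : Fin 3 →₀ ℕ) : S3 (d + e) = S3 d + S3 e := by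
  simp [S3]; ring

/-- The ideal of polynomials all of whose monomials have total degree ≥ n. -/
def K (k : Type*) [CommRing k] (n : ℕ) : Ideal (MvPolynomial (Fin 3) k) where
  carrier := {f | ∀ d ∈ f.support, n ≤ S3 d}
  zero_mem' := by simp
  add_mem' := by
    intro a b ha hb d hd
    rcases Finset.mem_union.mp (MvPolynomial.support_add hd) with h | h
    · exact ha d h
    · exact hb d h
  smul_mem' := by
    intro c f hf d hd
    rw [smul_eq_mul] at hd
    obtain ⟨d1, _, d2, hd2, rfl⟩ := Finset.mem_add.mp (MvPolynomial.support_mul c f hd)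
    have := hf d2 hd2
    rw [S3_add]; omega

lemma mem_K {n : ℕ} {f : MvPolynomial (Fin 3) k} :
    f ∈ K k n ↔ ∀ d ∈ f.support, n ≤ S3 d := Iff.rfl

/-- The maximal ideal (x, y, z). -/
noncomputable def M (k : Type*) [CommRing k] : Ideal (MvPolynomial (Fin 3) k) :=
  Ideal.span {X 0, X 1, X 2}

lemma monomial_mem_M_pow (n : ℕ) (d : Fin 3 →₀ ℕ) (c : k) (h : n ≤ S3 d) :
    monomial d c ∈ (M k) ^ n := by
  induction n generalizing d c with
  | zero => simp
  | succ n ih =>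
    have h1 : d 0 + d 1 + d 2 ≥ 1 := by
      have := h; unfold S3 at this; omega
    have : ∃ i : Fin 3, 1 ≤ d i ∧ S3 (Finsupp.single i 1) = 1 := by
      rcases Nat.lt_or_ge (d 0) 1 with h0 | h0
      · rcases Nat.lt_or_ge (d 1) 1 with hone | hone
        · exact ⟨2, by omega, by simp [S3]⟩
        · exact ⟨1, hone, by simp [S3]⟩
      · exact ⟨0, h0, by simp [S3]⟩
    obtain ⟨i, hi, hSi⟩ := this
    have hle : Finsupp.single i 1 ≤ d := Finsupp.single_le_iff.mpr hi
    set e := d - Finsupp.single i 1 with he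
    have hde : e + Finsupp.single i 1 = d := tsub_add_cancel_of_le hle
    have hSe : n ≤ S3 e := by
      have := congrArg S3 hde
      rw [S3_add, hSi] at this
      unfold S3 at h ⊢; unfold S3 at this; omega
    have heq : monomial d c = monomial e c * X i := by
      rw [MvPolynomial.X, MvPolynomial.monomial_mul, mul_one, hde]
    rw [heq, pow_succ]
    exact Ideal.mul_mem_mul (ih e c hSe)
      (Ideal.subset_span (by fin_cases i <;> simp))

lemma K_le_M_pow (n : ℕ) (f : MvPolynomial (Fin 3) k) (hf : f ∈ K k n) :
    f ∈ (M k) ^ n := by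
  rw [MvPolynomial.as_sum f]
  exact Ideal.sum_mem _ fun d hd => monomial_mem_M_pow n d _ (hf d hd)

lemma M_pow_le_K [Nontrivial k] (n : ℕ) : (M k) ^ n ≤ K k n := by
  induction n with
  | zero => intro f _ d _; simp [S3]
  | succ n ih =>
    rw [pow_succ]
    rw [Ideal.mul_le]
    intro a ha b hb d hd
    obtain ⟨d1, hd1, d2, hd2, rfl⟩ := Finset.mem_add.mp (MvPolynomial.support_mul a b hd)
    have h1 : n ≤ S3 d1 := ih ha d1 hd1
    have h2 : 1 ≤ S3 d2 := by
      have hbK : b ∈ K k 1 := by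
        have : M k ≤ K k 1 := by
          rw [M, Ideal.span_le]
          intro q hq
          simp only [Set.mem_insert_iff, Set.mem_singleton_iff] at hq
          rcases hq with rfl | rfl | rfl <;>
          · intro d hd
            rw [MvPolynomial.support_X] at hd
            rcases Finset.mem_singleton.mp hd with rfl
            simp [S3]
        exact this hb
      exact hbK d2 hd2
    rw [S3_add]; omega

end EHUAux

open EHUAux

set_option maxHeartbeats 1000000 in
set_option synthInstance.maxHeartbeats 400000 in
/-- In `R = (ℤ/p)[x,y,z]/((xᵖ, yᵖ) + (x,y,z)^(p+1))`, the annihilator of the image of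
`z` is exactly the image of `(x,y,z)ᵖ`; consequently the ideal of `R` generated by the
image of `z` is isomorphic as an `R`-module to `R/((x,y,z)ᵖ·R)`. -/
theorem annihilator_of_z_in_EHU_example
    (p : ℕ) (hp : p.Prime)
    (x y z : MvPolynomial (Fin 3) (ZMod p))
    (hx : x = X 0) (hy : y = X 1) (hz : z = X 2)
    (J : Ideal (MvPolynomial (Fin 3) (ZMod p)))
    (hJ : J = Ideal.span {x ^ p, y ^ p} + (Ideal.span {x, y, z}) ^ (p + 1))
    (π : MvPolynomial (Fin 3) (ZMod p) →+* MvPolynomial (Fin 3) (ZMod p) ⧸ J)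
    (hπ : π = Ideal.Quotient.mk J) :
    (∀ u : MvPolynomial (Fin 3) (ZMod p) ⧸ J,
        u * π z = 0 ↔ u ∈ Ideal.map π ((Ideal.span {x, y, z}) ^ p)) ∧
    Nonempty
      ((Ideal.span {π z} : Ideal (MvPolynomial (Fin 3) (ZMod p) ⧸ J)) ≃ₗ[MvPolynomial (Fin 3) (ZMod p) ⧸ J]
        (MvPolynomial (Fin 3) (ZMod p) ⧸ J) ⧸ Ideal.map π ((Ideal.span {x, y, z}) ^ p)) := by
  have : Fact p.Prime := ⟨hp⟩
  subst hx hy hz hπ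
  have hM : Ideal.span {X 0, X 1, X 2} = M (ZMod p) := rfl
  -- the monomial-ideal overestimate of J
  set L : Ideal (MvPolynomial (Fin 3) (ZMod p)) :=
    { carrier := {f | ∀ d ∈ f.support, p ≤ d 0 ∨ p ≤ d 1 ∨ p + 1 ≤ S3 d}
      zero_mem' := by simp
      add_mem' := by
        intro a b ha hb d hd
        rcases Finset.mem_union.mp (MvPolynomial.support_add hd) with h | h
        · exact ha d h
        · exact hb d h
      smul_mem' := by
        intro c f hf d hd
        rw [smul_eq_mul] at hd
        obtain ⟨d1, _, d2, hd2, rfl⟩ := Finset.mem_add.mp (MvPolynomial.support_mul c f hd)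
        have := hf d2 hd2
        have hS := S3_add d1 d2
        simp only [Finsupp.add_apply]
        omega } with hL
  have hJL : J ≤ L := by
    rw [hJ]
    apply sup_le
    · rw [Ideal.span_le]
      intro q hq d hd
      simp only [Set.mem_insert_iff, Set.mem_singleton_iff] at hq
      rcases hq with rfl | rfl
      · rw [MvPolynomial.X_pow_eq_monomial] at hd
        rw [MvPolynomial.support_monomial, if_neg one_ne_zero] at hd
        rcases Finset.mem_singleton.mp hd with rfl
        left; simp
      · rw [MvPolynomial.X_pow_eq_monomial] at hd
        rw [MvPolynomial.support_monomial, if_neg one_ne_zero] at hd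
        rcases Finset.mem_singleton.mp hd with rfl
        right; left; simp
    · intro f hf d hd
      right; right
      exact M_pow_le_K (p + 1) (hM ▸ hf) d hd
  -- key fact: f * z ∈ J → f ∈ M^p
  have key : ∀ f : MvPolynomial (Fin 3) (ZMod p),
      f * X 2 ∈ J → f ∈ Ideal.span {X 0, X 1, X 2} ^ p := by
    intro f hf
    rw [hM]
    apply K_le_M_pow
    intro d hd
    have hc : MvPolynomial.coeff (d + Finsupp.single 2 1) (f * X 2) ≠ 0 := by
      rw [MvPolynomial.coeff_mul_X]
      exact MvPolynomial.mem_support_iff.mp hd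
    have hmem : (d + Finsupp.single 2 1) ∈ (f * X 2).support :=
      MvPolynomial.mem_support_iff.mpr hc
    have := hJL hf _ hmem
    have hS := S3_add d (Finsupp.single 2 1)
    have hS1 : S3 (Finsupp.single (2 : Fin 3) 1) = 1 := by simp [S3]
    simp only [Finsupp.add_apply] at this
    have h0 : (Finsupp.single (2 : Fin 3) 1) 0 = 0 := by simp
    have h1 : (Finsupp.single (2 : Fin 3) 1) 1 = 0 := by simp
    rw [h0, h1] at this
    have hd0 : d 0 ≤ S3 d := by unfold S3; omega
    have hd1 : d 1 ≤ S3 d := by unfold S3; omega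
    omega
  -- membership of M^(p+1) in J
  have hMp1 : (Ideal.span {X 0, X 1, X 2} : Ideal (MvPolynomial (Fin 3) (ZMod p))) ^ (p + 1) ≤ J := by
    rw [hJ]; exact le_sup_right
  have main : ∀ u : MvPolynomial (Fin 3) (ZMod p) ⧸ J,
      u * Ideal.Quotient.mk J (X 2) = 0 ↔
        u ∈ Ideal.map (Ideal.Quotient.mk J) (Ideal.span {X 0, X 1, X 2} ^ p) := by
    intro u
    constructor
    · intro h
      obtain ⟨f, rfl⟩ := Ideal.Quotient.mk_surjective u
      rw [← map_mul, Ideal.Quotient.eq_zero_iff_mem] at h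
      exact Ideal.mem_map_of_mem _ (key f h)
    · intro h
      obtain ⟨a, ha, rfl⟩ :=
        (Ideal.mem_map_iff_of_surjective _ Ideal.Quotient.mk_surjective).mp h
      rw [← map_mul, Ideal.Quotient.eq_zero_iff_mem]
      apply hMp1
      rw [pow_succ]
      exact Ideal.mul_mem_mul ha (Ideal.subset_span (by simp))
  refine ⟨main, ?_⟩
  set R' := MvPolynomial (Fin 3) (ZMod p) ⧸ J
  set ζ : R' := Ideal.Quotient.mk J (X 2)
  set f : R' →ₗ[R'] R' := LinearMap.toSpanSingleton R' R' ζ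
  have hker : LinearMap.ker f =
      (Ideal.map (Ideal.Quotient.mk J) (Ideal.span {X 0, X 1, X 2} ^ p) :
        Ideal R') := by
    ext u
    rw [LinearMap.mem_ker]
    show u • ζ = 0 ↔ _
    rw [smul_eq_mul]
    exact main u
  have hrange : (Ideal.span {ζ} : Submodule R' R') = LinearMap.range f :=
    LinearMap.span_singleton_eq_range R' R' ζ
  exact ⟨(LinearEquiv.ofEq _ _ hrange).trans
    (f.quotKerEquivRange.symm.trans (Submodule.quotEquivOfEq _ _ hker))⟩
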